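/- For the scale model, if (A.1) ∫|u ṗ(u)| du < ∞, (A.4) sup_x |(∂/∂θ)log p(θ₀^{-1}x) · (p(α^{-1}x)/p(θ₀^{-1}x))^γ| < ∞, and, depending on sign, (A.2) sup_x p(α^{-1}x)/p(θ₀^{-1}x) < ∞ when γ > 0 or (A.3) sup_x p(θ₀^{-1}x)/p(α^{-1}x) < ∞ when γ < 0, then the function x ↦ (p_α(x)/p_{θ₀}(x))^γ · ṗ_{θ₀}(x)/p_{θ₀}(x) is bounded, hence the influence function IF(x;T_α,P_{θ₀}) is bounded in x (B-robustness). -/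

import Mathlib

open MeasureTheory

/-- B-robustness for scale models: under (A.1), (A.4) and, according to the sign of `γ`,
(A.2) or (A.3), the weighted score `x ↦ (p_α(x)/p_{θ₀}(x))^γ · ṗ_{θ₀}(x)/p_{θ₀}(x)` is
bounded, hence the influence function `IF(x;T_α,P_{θ₀}) = A⁻¹(C − w(x))` is bounded. -/
theorem scale_model_B_robust
    (p p' : ℝ → ℝ) (hp : ∀ u, HasDerivAt p (p' u) u) (hppos : ∀ u, 0 < p u)
    (θ₀ α γ : ℝ) (hθ₀ : 0 < θ₀) (hα : 0 < α) (hγ : γ ≠ 0)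
    (L : ℝ → ℝ)   -- x ↦ (∂/∂θ) log p(θ⁻¹x) at θ = θ₀
    (hL : ∀ x, HasDerivAt (fun θ : ℝ => Real.log (p (x / θ))) (L x) θ₀)
    -- (A.1): ∫ |u ṗ(u)| du < ∞
    (hA1 : Integrable (fun u => u * p' u) MeasureTheory.volume)
    -- (A.4)
    (hA4 : ∃ M, ∀ x, |L x * (p (x / α) / p (x / θ₀)) ^ γ| ≤ M)
    -- (A.2) when γ > 0, or (A.3) when γ < 0
    (hA23 : (0 < γ ∧ ∃ M, ∀ x, p (x / α) / p (x / θ₀) ≤ M) ∨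
            (γ < 0 ∧ ∃ M, ∀ x, p (x / θ₀) / p (x / α) ≤ M))
    (Ainv C : ℝ)   -- inverse of ∫ m''(θ₀,α) dP_{θ₀} and C = ∫ (p_α/p_{θ₀})^γ ṗ_{θ₀} dλ
    (w : ℝ → ℝ)
    (hw : ∀ x, w x = ((p (x / α) / α) / (p (x / θ₀) / θ₀)) ^ γ
        * ((-(1 / θ₀ ^ 2) * (p (x / θ₀) + (x / θ₀) * p' (x / θ₀))) / (p (x / θ₀) / θ₀))) :
    (∃ M, ∀ x, |w x| ≤ M) ∧ (∃ K, ∀ x, |Ainv * (C - w x)| ≤ K) := by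
  obtain ⟨M₄, hM₄⟩ := hA4
  -- bound on r^γ
  have hRbound : ∃ R, ∀ x, (p (x / α) / p (x / θ₀)) ^ γ ≤ R := by
    rcases hA23 with ⟨hγpos, M, hM⟩ | ⟨hγneg, M, hM⟩
    · refine ⟨M ^ γ, fun x => ?_⟩
      exact Real.rpow_le_rpow (le_of_lt (div_pos (hppos _) (hppos _))) (hM x) hγpos.le
    · refine ⟨M ^ (-γ), fun x => ?_⟩
      have hr : 0 < p (x / α) / p (x / θ₀) := div_pos (hppos _) (hppos _)
      have h1 : (p (x / α) / p (x / θ₀)) ^ γ = (p (x / θ₀) / p (x / α)) ^ (-γ) := by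
        rw [show p (x / θ₀) / p (x / α) = (p (x / α) / p (x / θ₀))⁻¹ from (inv_div _ _).symm,
          Real.inv_rpow hr.le, Real.rpow_neg hr.le, inv_inv]
      rw [h1]
      exact Real.rpow_le_rpow (le_of_lt (div_pos (hppos _) (hppos _))) (hM x) (by linarith)
  obtain ⟨R, hR⟩ := hRbound
  have hRnn : 0 ≤ R := le_trans (Real.rpow_nonneg (div_pos (hppos (0 / α)) (hppos (0 / θ₀))).le γ) (hR 0)
  -- rewrite w
  have key : ∀ x, w x = (θ₀ / α) ^ γ *
      ((p (x / α) / p (x / θ₀)) ^ γ * L x - (p (x / α) / p (x / θ₀)) ^ γ / θ₀) := by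
    intro x
    -- compute L x
    have h1 : HasDerivAt (fun θ : ℝ => x / θ) (x * (-(θ₀ ^ 2)⁻¹)) θ₀ := by
      simpa [div_eq_mul_inv] using (hasDerivAt_inv hθ₀.ne').const_mul x
    have h2 : HasDerivAt (fun θ : ℝ => p (x / θ)) (p' (x / θ₀) * (x * (-(θ₀ ^ 2)⁻¹))) θ₀ :=
      (hp (x / θ₀)).comp θ₀ h1
    have h3 := h2.log (hppos (x / θ₀)).ne'
    have hLx : L x = p' (x / θ₀) * (x * (-(θ₀ ^ 2)⁻¹)) / p (x / θ₀) := (hL x).unique h3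
    rw [hw x]
    have ha := hppos (x / α)
    have hb := hppos (x / θ₀)
    have hsplit : ((p (x / α) / α) / (p (x / θ₀) / θ₀)) = (θ₀ / α) * (p (x / α) / p (x / θ₀)) := by
      field_simp
    rw [hsplit, Real.mul_rpow (by positivity) (by positivity)]
    rw [hLx]
    field_simp
    ring
  have hwbound : ∀ x, |w x| ≤ (θ₀ / α) ^ γ * (M₄ + R / θ₀) := by
    intro x
    rw [key x, abs_mul, abs_of_nonneg (Real.rpow_nonneg (div_pos hθ₀ hα).le γ)]
    have hrγnn : 0 ≤ (p (x / α) / p (x / θ₀)) ^ γ := Real.rpow_nonneg (div_pos (hppos _) (hppos _)).le γ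
    have h1 : |(p (x / α) / p (x / θ₀)) ^ γ * L x - (p (x / α) / p (x / θ₀)) ^ γ / θ₀|
        ≤ M₄ + R / θ₀ := by
      refine le_trans (abs_sub _ _) ?_
      have hA : |(p (x / α) / p (x / θ₀)) ^ γ * L x| ≤ M₄ := by
        rw [mul_comm]; exact hM₄ x
      have hB : |(p (x / α) / p (x / θ₀)) ^ γ / θ₀| ≤ R / θ₀ := by
        rw [abs_of_nonneg (div_nonneg hrγnn hθ₀.le)]
        gcongr
        exact hR x
      linarith
    exact mul_le_mul_of_nonneg_left h1 (Real.rpow_nonneg (div_pos hθ₀ hα).le γ)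
  refine ⟨⟨(θ₀ / α) ^ γ * (M₄ + R / θ₀), hwbound⟩, ⟨|Ainv| * (|C| + (θ₀ / α) ^ γ * (M₄ + R / θ₀)), fun x => ?_⟩⟩
  rw [abs_mul]
  refine mul_le_mul_of_nonneg_left ?_ (abs_nonneg _)
  calc |C - w x| ≤ |C| + |w x| := abs_sub _ _
    _ ≤ |C| + (θ₀ / α) ^ γ * (M₄ + R / θ₀) := by linarith [hwbound x]
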